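/- Let w and w' be injective real value assignments on the items {1, …, m} that differ at exactly one item, and let p ≠ q be items that are contiguous in both w and w', with w(p) < w(q) and w'(p) > w'(q). Then for all items u, v with {u,v} ≠ {p,q}: w(u) < w(v) if and only if w'(u) < w'(v); that is, the order of the items by value is the same in w and w' except that p and q are swapped. -/
import Mathlib


/-- If two injective value assignments on the items `1, …, m` differ
at exactly one item, and `p ≠ q` are contiguous in both with `w p < w q` and
`w' p > w' q`, then the order of the items by value is the same in `w` and `w'`
except that `p` and `q` are swapped. -/
theorem statement6 (m : ℕ) (w w' : ℕ → ℝ)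
    (hw : Set.InjOn w (Set.Icc 1 m)) (hw' : Set.InjOn w' (Set.Icc 1 m))
    (p q : ℕ) (hp1 : 1 ≤ p) (hpm : p ≤ m) (hq1 : 1 ≤ q) (hqm : q ≤ m) (hpq : p ≠ q)
    (hdiff : ∃ j, 1 ≤ j ∧ j ≤ m ∧ w j ≠ w' j ∧ ∀ i, 1 ≤ i → i ≤ m → i ≠ j → w i = w' i)
    (hcontig : ∀ u, 1 ≤ u → u ≤ m → u ≠ p → u ≠ q →
      w u ∉ Set.Icc (min (w p) (w q)) (max (w p) (w q)))
    (hcontig' : ∀ u, 1 ≤ u → u ≤ m → u ≠ p → u ≠ q →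
      w' u ∉ Set.Icc (min (w' p) (w' q)) (max (w' p) (w' q)))
    (horder : w p < w q) (horder' : w' q < w' p) :
    ∀ u v : ℕ, 1 ≤ u → u ≤ m → 1 ≤ v → v ≤ m →
      ¬((u = p ∧ v = q) ∨ (u = q ∧ v = p)) →
      (w u < w v ↔ w' u < w' v) := by
  obtain ⟨j, hj1, hjm, hjne, hjeq⟩ := hdiff
  have hjpq : j = p ∨ j = q := by
    by_contra h
    push_neg at h
    have hp' : w p = w' p := hjeq p hp1 hpm (fun e => h.1 e.symm)
    have hq' : w q = w' q := hjeq q hq1 hqm (fun e => h.2 e.symm)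
    linarith
  have key : ∀ v, 1 ≤ v → v ≤ m → v ≠ p → v ≠ q →
      w' v = w v ∧ ((w v < w p ∧ w v < w q ∧ w v < w' p ∧ w v < w' q) ∨
        (w p < w v ∧ w q < w v ∧ w' p < w v ∧ w' q < w v)) := by
    intro v hv1 hvm hvp hvq
    have hvj : v ≠ j := by rcases hjpq with h | h <;> omega
    have heq : w v = w' v := hjeq v hv1 hvm hvj
    have hc := hcontig v hv1 hvm hvp hvq
    have hc' := hcontig' v hv1 hvm hvp hvq
    rw [min_eq_left horder.le, max_eq_right horder.le] at hc
    rw [min_eq_right horder'.le, max_eq_left horder'.le] at hc'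
    simp only [Set.mem_Icc, not_and, not_le] at hc hc'
    rcases hjpq with h | h
    · have hqj : q ≠ j := by omega
      have hqq : w q = w' q := hjeq q hq1 hqm hqj
      rcases lt_or_ge (w v) (w p) with hlt | hge
      · exact ⟨heq.symm, Or.inl ⟨hlt, by linarith, by linarith, by linarith⟩⟩
      · have h1 : w q < w v := hc hge
        have h2 : w' p < w' v := hc' (by linarith)
        exact ⟨heq.symm, Or.inr ⟨by linarith, h1, by linarith, by linarith⟩⟩
    · have hpj : p ≠ j := by omega
      have hpp : w p = w' p := hjeq p hp1 hpm hpj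
      rcases lt_or_ge (w v) (w p) with hlt | hge
      · have h2 : w' v < w' q := by
          by_contra hcon
          push_neg at hcon
          have := hc' hcon
          linarith
        exact ⟨heq.symm, Or.inl ⟨hlt, by linarith, by linarith, by linarith⟩⟩
      · have h1 : w q < w v := hc hge
        exact ⟨heq.symm, Or.inr ⟨by linarith, h1, by linarith, by linarith⟩⟩
  intro u v hu1 hum hv1 hvm hne
  push_neg at hne
  by_cases hup : u = p
  · subst hup
    by_cases hvp : v = u
    · subst hvp; simp
    · have hvq : v ≠ q := hne.1 rfl
      obtain ⟨he, hside⟩ := key v hv1 hvm hvp hvq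
      rcases hside with ⟨a, b, c, d⟩ | ⟨a, b, c, d⟩ <;>
        constructor <;> intro hlt <;> linarith
  by_cases huq : u = q
  · subst huq
    by_cases hvq : v = u
    · subst hvq; simp
    · have hvp : v ≠ p := hne.2 rfl
      obtain ⟨he, hside⟩ := key v hv1 hvm hvp hvq
      rcases hside with ⟨a, b, c, d⟩ | ⟨a, b, c, d⟩ <;>
        constructor <;> intro hlt <;> linarith
  obtain ⟨heu, hsideu⟩ := key u hu1 hum hup huq
  by_cases hvp : v = p
  · subst hvp
    rcases hsideu with ⟨a, b, c, d⟩ | ⟨a, b, c, d⟩ <;>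
      constructor <;> intro hlt <;> linarith
  by_cases hvq : v = q
  · subst hvq
    rcases hsideu with ⟨a, b, c, d⟩ | ⟨a, b, c, d⟩ <;>
      constructor <;> intro hlt <;> linarith
  obtain ⟨hev, _⟩ := key v hv1 hvm hvp hvq
  rw [hev, heu]
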